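/- Hermite–Genocchi formula: for an n-times continuously differentiable function f : ℝ → ℝ and pairwise distinct points x_0,...,x_n, the divided difference satisfies [x_0,...,x_n; f] = ∫_{Σ_n} f^{(n)}(Σ_{j=0}^{n} s_j x_j) ds, where Σ_n = {(s_1,...,s_n) : s_j ≥ 0, Σ_{j=1}^{n} s_j ≤ 1} is the standard n-simplex, s_0 = 1 − Σ_{j=1}^{n} s_j, and ds is Lebesgue measure on Σ_n. -/

import Mathlib

open MeasureTheory

/-- Newton divided difference `[x_0, ..., x_n; f]`, defined recursively. -/
noncomputable def divDiff (f : ℝ → ℝ) : (n : ℕ) → (Fin (n + 1) → ℝ) → ℝ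
  | 0, x => f (x 0)
  | n + 1, x =>
      (divDiff f n (fun i => x i.succ) - divDiff f n (fun i => x i.castSucc)) /
        (x (Fin.last (n + 1)) - x 0)

lemma divDiff_eq_sum (f : ℝ → ℝ) : ∀ (n : ℕ) (x : Fin (n + 1) → ℝ), Function.Injective x →
    divDiff f n x = ∑ i, f (x i) * (∏ j ∈ Finset.univ.erase i, (x i - x j))⁻¹ := by
  intro n
  induction n with
  | zero =>
    intro x _
    simp [divDiff]
  | succ n ih =>
    intro x hx
    set N : Fin (n + 2) := Fin.last (n + 1) with hN
    have hN0 : N ≠ 0 := by simp [hN, Fin.ext_iff]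
    have hsub : ∀ i j : Fin (n + 2), i ≠ j → x i - x j ≠ 0 := fun i j hij =>
      sub_ne_zero.mpr (fun h => hij (hx h))
    set a : Fin (n + 2) → ℝ := fun i =>
      if i = 0 then 0 else f (x i) * (∏ j ∈ (Finset.univ.erase 0).erase i, (x i - x j))⁻¹ with ha
    set b : Fin (n + 2) → ℝ := fun i =>
      if i = N then 0 else f (x i) * (∏ j ∈ (Finset.univ.erase N).erase i, (x i - x j))⁻¹ with hb
    have hA : divDiff f n (fun i => x i.succ) = ∑ i, a i := by
      rw [ih (fun i => x i.succ) (fun p q h => Fin.succ_injective _ (hx h))]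
      rw [Fin.sum_univ_succ (f := a)]
      have ha0 : a 0 = 0 := by simp [ha]
      rw [ha0, zero_add]
      refine Finset.sum_congr rfl fun i _ => ?_
      have : a i.succ = f (x i.succ) *
          (∏ j ∈ (Finset.univ.erase 0).erase i.succ, (x i.succ - x j))⁻¹ := by
        simp [ha, Fin.succ_ne_zero]
      rw [this]
      congr 2
      have himg : (Finset.univ.erase i).image Fin.succ = (Finset.univ.erase 0).erase i.succ := by
        ext j
        simp only [Finset.mem_image, Finset.mem_erase, Finset.mem_univ, and_true]
        constructor
        · rintro ⟨k, hk, rfl⟩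
          exact ⟨fun h => hk (Fin.succ_injective _ h), Fin.succ_ne_zero k⟩
        · rintro ⟨hj1, hj2⟩
          obtain ⟨k, rfl⟩ := Fin.exists_succ_eq.mpr hj2
          exact ⟨k, fun h => hj1 (by rw [h]), rfl⟩
      rw [← himg, Finset.prod_image (fun p _ q _ h => Fin.succ_injective _ h)]
    have hB : divDiff f n (fun i => x i.castSucc) = ∑ i, b i := by
      rw [ih (fun i => x i.castSucc) (fun p q h => Fin.castSucc_injective _ (hx h))]
      rw [Fin.sum_univ_castSucc (f := b)]
      have hb0 : b N = 0 := by simp [hb]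
      rw [hb0, add_zero]
      refine Finset.sum_congr rfl fun i _ => ?_
      have hne : i.castSucc ≠ N := (Fin.castSucc_lt_last i).ne
      have : b i.castSucc = f (x i.castSucc) *
          (∏ j ∈ (Finset.univ.erase N).erase i.castSucc, (x i.castSucc - x j))⁻¹ := by
        simp [hb, hne]
      rw [this]
      congr 2
      have himg : (Finset.univ.erase i).image Fin.castSucc
          = (Finset.univ.erase N).erase i.castSucc := by
        ext j
        simp only [Finset.mem_image, Finset.mem_erase, Finset.mem_univ, and_true]
        constructor
        · rintro ⟨k, hk, rfl⟩
          exact ⟨fun h => hk (Fin.castSucc_injective _ h), (Fin.castSucc_lt_last k).ne⟩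
        · rintro ⟨hj1, hj2⟩
          obtain ⟨k, rfl⟩ := Fin.exists_castSucc_eq.mpr hj2
          exact ⟨k, fun h => hj1 (by rw [h]), rfl⟩
      rw [← himg, Finset.prod_image (fun p _ q _ h => Fin.castSucc_injective _ h)]
    show (divDiff f n (fun i => x i.succ) - divDiff f n (fun i => x i.castSucc)) / (x N - x 0) = _
    rw [hA, hB, ← Finset.sum_sub_distrib, Finset.sum_div]
    refine Finset.sum_congr rfl fun i _ => ?_
    rcases eq_or_ne i 0 with rfl | hi0
    · -- i = 0
      have ha0 : a 0 = 0 := by simp [ha]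
      have hb0 : b 0 = f (x 0) * (∏ j ∈ (Finset.univ.erase N).erase 0, (x 0 - x j))⁻¹ := by
        simp [hb, hN0.symm]
      have hcomm : (Finset.univ.erase N).erase 0 = (Finset.univ.erase (0 : Fin (n+2))).erase N :=
        Finset.erase_right_comm
      have hmem : N ∈ Finset.univ.erase (0 : Fin (n + 2)) := by simp [hN0]
      have hprod : ∏ j ∈ Finset.univ.erase (0 : Fin (n+2)), (x 0 - x j)
          = (x 0 - x N) * ∏ j ∈ (Finset.univ.erase (0 : Fin (n+2))).erase N, (x 0 - x j) :=
        (Finset.mul_prod_erase _ _ hmem).symm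
      rw [ha0, hb0, hcomm, hprod]
      have h1 : x 0 - x N ≠ 0 := hsub _ _ hN0.symm
      have h2 : ∏ j ∈ (Finset.univ.erase (0 : Fin (n+2))).erase N, (x 0 - x j) ≠ 0 :=
        Finset.prod_ne_zero_iff.mpr fun j hj => hsub _ _ (Finset.mem_erase.mp
          (Finset.mem_of_mem_erase hj)).1.symm
      have h3 : x N - x 0 ≠ 0 := hsub _ _ hN0
      field_simp
      ring
    rcases eq_or_ne i N with rfl | hiN
    · -- i = N
      have hb0 : b N = 0 := by simp [hb]
      have ha0 : a N = f (x N) * (∏ j ∈ (Finset.univ.erase 0).erase N, (x N - x j))⁻¹ := by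
        simp [ha, hN0]
      have hcomm : (Finset.univ.erase (0:Fin (n+2))).erase N = (Finset.univ.erase N).erase 0 :=
        Finset.erase_right_comm
      have hmem : (0 : Fin (n + 2)) ∈ Finset.univ.erase N := by simp [hN0.symm]
      have hprod : ∏ j ∈ Finset.univ.erase N, (x N - x j)
          = (x N - x 0) * ∏ j ∈ (Finset.univ.erase N).erase 0, (x N - x j) :=
        (Finset.mul_prod_erase _ _ hmem).symm
      rw [hb0, ha0, hcomm, hprod]
      have h2 : ∏ j ∈ (Finset.univ.erase N).erase 0, (x N - x j) ≠ 0 :=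
        Finset.prod_ne_zero_iff.mpr fun j hj => hsub _ _ (Finset.mem_erase.mp
          (Finset.mem_of_mem_erase hj)).1.symm
      have h3 : x N - x 0 ≠ 0 := hsub _ _ hN0
      field_simp
      ring
    · -- i ≠ 0, i ≠ N
      have ha0 : a i = f (x i) * (∏ j ∈ (Finset.univ.erase 0).erase i, (x i - x j))⁻¹ := by
        simp [ha, hi0]
      have hb0 : b i = f (x i) * (∏ j ∈ (Finset.univ.erase N).erase i, (x i - x j))⁻¹ := by
        simp [hb, hiN]
      set R : ℝ := ∏ j ∈ ((Finset.univ.erase (0:Fin (n+2))).erase N).erase i, (x i - x j) with hR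
      have hPA : ∏ j ∈ (Finset.univ.erase 0).erase i, (x i - x j)
          = (x i - x N) * R := by
        have hmem : N ∈ (Finset.univ.erase (0 : Fin (n+2))).erase i := by
          simp [hN0, hiN.symm]
        rw [← Finset.mul_prod_erase _ _ hmem, hR, Finset.erase_right_comm (a := i) (b := N)]
      have hPB : ∏ j ∈ (Finset.univ.erase N).erase i, (x i - x j) = (x i - x 0) * R := by
        have hmem : (0 : Fin (n+2)) ∈ (Finset.univ.erase N).erase i := by
          simp [hN0.symm, hi0.symm]
        rw [← Finset.mul_prod_erase _ _ hmem, hR]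
        congr 1
        rw [Finset.erase_right_comm (a := i) (b := 0),
          Finset.erase_right_comm (a := N) (b := 0)]
      have hQ : ∏ j ∈ Finset.univ.erase i, (x i - x j) = (x i - x 0) * ((x i - x N) * R) := by
        have h0mem : (0 : Fin (n+2)) ∈ Finset.univ.erase i := by simp [hi0.symm]
        rw [← Finset.mul_prod_erase _ _ h0mem]
        have hNmem : N ∈ (Finset.univ.erase i).erase 0 := by simp [hiN.symm, hN0]
        rw [← Finset.mul_prod_erase _ _ hNmem, hR]
        congr 2
        rw [Finset.erase_right_comm (a := i) (b := 0),
          Finset.erase_right_comm (a := i) (b := N)]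
      rw [ha0, hb0, hPA, hPB, hQ]
      have h1 : x i - x N ≠ 0 := hsub _ _ hiN
      have h2 : x i - x 0 ≠ 0 := hsub _ _ hi0
      have h3 : x N - x 0 ≠ 0 := hsub _ _ hN0
      have h4 : R ≠ 0 :=
        Finset.prod_ne_zero_iff.mpr fun j hj => hsub _ _ (Finset.mem_erase.mp hj).1.symm
      field_simp
      ring

lemma divDiff_comp_equiv (f : ℝ → ℝ) (n : ℕ) (x : Fin (n + 1) → ℝ)
    (hx : Function.Injective x) (π : Equiv.Perm (Fin (n + 1))) :
    divDiff f n (x ∘ π) = divDiff f n x := by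
  rw [divDiff_eq_sum f n _ (hx.comp π.injective), divDiff_eq_sum f n x hx]
  refine Fintype.sum_equiv π _ _ fun i => ?_
  simp only [Function.comp_apply]
  congr 2
  have himg : (Finset.univ.erase i).image π = Finset.univ.erase (π i) := by
    ext j
    simp only [Finset.mem_image, Finset.mem_erase, Finset.mem_univ, and_true]
    constructor
    · rintro ⟨k, hk, rfl⟩
      exact fun h => hk (π.injective h)
    · intro hj
      exact ⟨π.symm j, fun h => hj (by rw [← h]; simp), by simp⟩
  rw [← himg, Finset.prod_image (fun p _ q _ h => π.injective h)]


-- simplex facts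
lemma simplex_isClosed (n : ℕ) :
    IsClosed {s : Fin n → ℝ | (∀ j, 0 ≤ s j) ∧ ∑ j, s j ≤ 1} := by
  have h1 : IsClosed {s : Fin n → ℝ | ∀ j, 0 ≤ s j} := by
    have : {s : Fin n → ℝ | ∀ j, 0 ≤ s j} = ⋂ j, {s | 0 ≤ s j} := by
      ext s; simp
    rw [this]
    exact isClosed_iInter fun j => isClosed_le continuous_const (continuous_apply j)
  have h2 : IsClosed {s : Fin n → ℝ | ∑ j, s j ≤ 1} :=
    isClosed_le (by continuity) continuous_const
  exact (Set.setOf_and (p := fun s : Fin n → ℝ => ∀ j, 0 ≤ s j)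
    (q := fun s => ∑ j, s j ≤ 1)) ▸ h1.inter h2

lemma simplex_isCompact (n : ℕ) :
    IsCompact {s : Fin n → ℝ | (∀ j, 0 ≤ s j) ∧ ∑ j, s j ≤ 1} := by
  refine IsCompact.of_isClosed_subset (isCompact_Icc (a := (0 : Fin n → ℝ)) (b := 1))
    (simplex_isClosed n) ?_
  rintro s ⟨h1, h2⟩
  refine ⟨fun j => h1 j, fun j => ?_⟩
  calc s j ≤ ∑ k, s k := Finset.single_le_sum (fun k _ => h1 k) (Finset.mem_univ j)
  _ ≤ 1 := h2

lemma simplex_measurableSet (n : ℕ) :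
    MeasurableSet {s : Fin n → ℝ | (∀ j, 0 ≤ s j) ∧ ∑ j, s j ≤ 1} :=
  (simplex_isClosed n).measurableSet

lemma HG (n : ℕ) : ∀ (f : ℝ → ℝ), ContDiff ℝ n f → ∀ (x : Fin (n + 1) → ℝ),
    Function.Injective x →
    divDiff f n x =
      ∫ s in {s : Fin n → ℝ | (∀ j, 0 ≤ s j) ∧ ∑ j, s j ≤ 1},
        iteratedDeriv n f ((1 - ∑ j, s j) * x 0 + ∑ j : Fin n, s j * x j.succ) := by
  induction n with
  | zero =>
    intro f _ x _
    have hset : {s : Fin 0 → ℝ | (∀ j, 0 ≤ s j) ∧ ∑ j, s j ≤ 1} = Set.univ := by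
      ext s; simp
    rw [hset, Measure.restrict_univ, integral_unique]
    have hvol : (volume (Set.univ : Set (Fin 0 → ℝ))).toReal = 1 := by
      rw [MeasureTheory.volume_pi, MeasureTheory.Measure.pi_univ]; simp
    simp [divDiff, hvol]
    rw [measureReal_def, hvol, one_mul]
  | succ n ih =>
    intro f hf x hx
    have hfn : ContDiff ℝ n f := hf.of_succ
    have hN0 : Fin.last (n + 1) ≠ (0 : Fin (n + 2)) := by
      simp [Fin.ext_iff]
    have hd : x (Fin.last (n + 1)) - x 0 ≠ 0 :=
      sub_ne_zero.mpr fun h => hN0 (hx h)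
    have hFd : ∀ y : ℝ, HasDerivAt (iteratedDeriv n f) (iteratedDeriv (n + 1) f y) y := by
      intro y
      have h1 : DifferentiableAt ℝ (iteratedDeriv n f) y :=
        (hf.differentiable_iteratedDeriv n (by exact_mod_cast n.lt_succ_self)) y
      have h2 := h1.hasDerivAt
      rw [iteratedDeriv_succ]
      exact h2
    have hcont : Continuous (iteratedDeriv (n + 1) f) :=
      hf.continuous_iteratedDeriv (n + 1) (by exact_mod_cast le_refl _)
    have hcontn : Continuous (iteratedDeriv n f) :=
      hfn.continuous_iteratedDeriv n (by exact_mod_cast le_refl _)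
    -- the measurable equiv splitting off the last coordinate
    set e := MeasurableEquiv.piFinSuccAbove (fun _ : Fin (n + 1) => ℝ) (Fin.last n) with he
    have hps : MeasurePreserving e volume
        ((volume : Measure ℝ).prod (volume : Measure (Fin n → ℝ))) :=
      MeasureTheory.volume_preserving_piFinSuccAbove (fun _ : Fin (n + 1) => ℝ) (Fin.last n)
    have hv1 : ∀ (t : ℝ) (s : Fin n → ℝ) (k : Fin n),
        e.symm (t, s) (Fin.castSucc k) = s k := by
      intro t s k
      rw [← Fin.succAbove_last]
      simp [he]
    have hv2 : ∀ (t : ℝ) (s : Fin n → ℝ), e.symm (t, s) (Fin.last n) = t := by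
      intro t s
      simp [he]
    have hv3 : ∀ (t : ℝ) (s : Fin n → ℝ), ∑ j, e.symm (t, s) j = t + ∑ k, s k := by
      intro t s
      rw [Fin.sum_univ_castSucc]
      simp only [hv1, hv2]
      ring
    have hv4 : ∀ (t : ℝ) (s : Fin n → ℝ),
        ∑ j : Fin (n + 1), e.symm (t, s) j * x j.succ
          = (∑ k : Fin n, s k * x (Fin.castSucc k.succ)) + t * x (Fin.last (n + 1)) := by
      intro t s
      rw [Fin.sum_univ_castSucc]
      simp only [hv1, hv2, Fin.succ_castSucc, Fin.succ_last]
    set S1 := {s : Fin (n + 1) → ℝ | (∀ j, 0 ≤ s j) ∧ ∑ j, s j ≤ 1} with hS1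
    set S0 := {s : Fin n → ℝ | (∀ j, 0 ≤ s j) ∧ ∑ j, s j ≤ 1} with hS0
    set G : (Fin (n + 1) → ℝ) → ℝ := fun s =>
      iteratedDeriv (n + 1) f ((1 - ∑ j, s j) * x 0 + ∑ j : Fin (n + 1), s j * x j.succ)
      with hG
    have hGcont : Continuous G := by
      apply hcont.comp
      fun_prop
    have hA : ∀ (t : ℝ) (s : Fin n → ℝ), G (e.symm (t, s)) =
        iteratedDeriv (n + 1) f
          (((1 - ∑ j, s j) * x 0 + ∑ j : Fin n, s j * x (Fin.castSucc j.succ))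
            + t * (x (Fin.last (n + 1)) - x 0)) := by
      intro t s
      rw [hG]
      simp only
      rw [hv3, hv4]
      congr 1
      ring
    have hmem : ∀ (t : ℝ) (s : Fin n → ℝ),
        e.symm (t, s) ∈ S1 ↔ (s ∈ S0 ∧ t ∈ Set.Icc (0 : ℝ) (1 - ∑ j, s j)) := by
      intro t s
      simp only [hS1, hS0, Set.mem_setOf_eq, Set.mem_Icc]
      constructor
      · rintro ⟨h1, h2⟩
        rw [hv3] at h2
        have ht0 : 0 ≤ t := by have := h1 (Fin.last n); rwa [hv2] at this
        have hsk : ∀ k, 0 ≤ s k := fun k => by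
          have := h1 (Fin.castSucc k); rwa [hv1] at this
        exact ⟨⟨hsk, by linarith⟩, ht0, by linarith⟩
      · rintro ⟨⟨hsk, hsum⟩, ht0, ht1⟩
        constructor
        · intro j
          refine Fin.lastCases ?_ ?_ j
          · rw [hv2]; exact ht0
          · intro k; rw [hv1]; exact hsk k
        · rw [hv3]; linarith
    have hIntOn : IntegrableOn G S1 volume :=
      hGcont.continuousOn.integrableOn_compact (simplex_isCompact (n + 1))
    have hIndInt : Integrable (S1.indicator G) volume :=
      (integrable_indicator_iff (simplex_measurableSet (n + 1))).mpr hIntOn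
    have hInt2 : Integrable (fun p : ℝ × (Fin n → ℝ) => S1.indicator G (e.symm p))
        ((volume : Measure ℝ).prod (volume : Measure (Fin n → ℝ))) :=
      ((MeasurePreserving.symm e hps).integrable_comp_emb e.symm.measurableEmbedding).mpr hIndInt
    -- the inner integral after Fubini
    have key : ∫ s in S1, G s =
        ∫ s in S0, (iteratedDeriv n f
            (((1 - ∑ j, s j) * x 0 + ∑ j : Fin n, s j * x (Fin.castSucc j.succ))
              + (1 - ∑ j, s j) * (x (Fin.last (n + 1)) - x 0))
          - iteratedDeriv n f
            ((1 - ∑ j, s j) * x 0 + ∑ j : Fin n, s j * x (Fin.castSucc j.succ)))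
          * (x (Fin.last (n + 1)) - x 0)⁻¹ := by
      calc ∫ s in S1, G s = ∫ s, S1.indicator G s :=
            (integral_indicator (simplex_measurableSet (n + 1))).symm
        _ = ∫ p : ℝ × (Fin n → ℝ), S1.indicator G (e.symm p)
              ∂((volume : Measure ℝ).prod (volume : Measure (Fin n → ℝ))) :=
            ((MeasurePreserving.symm e hps).integral_comp e.symm.measurableEmbedding _).symm
        _ = ∫ s : Fin n → ℝ, ∫ t : ℝ, S1.indicator G (e.symm (t, s)) :=
            integral_prod_symm _ hInt2
        _ = ∫ s : Fin n → ℝ, S0.indicator (fun s => ∫ t in Set.Icc (0 : ℝ) (1 - ∑ j, s j),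
              iteratedDeriv (n + 1) f
                (((1 - ∑ j, s j) * x 0 + ∑ j : Fin n, s j * x (Fin.castSucc j.succ))
                  + t * (x (Fin.last (n + 1)) - x 0))) s := by
            congr 1
            funext s
            by_cases hs : s ∈ S0
            · rw [Set.indicator_of_mem hs]
              have hte : ∀ t : ℝ, S1.indicator G (e.symm (t, s)) =
                  (Set.Icc (0 : ℝ) (1 - ∑ j, s j)).indicator (fun t =>
                    iteratedDeriv (n + 1) f
                      (((1 - ∑ j, s j) * x 0 + ∑ j : Fin n, s j * x (Fin.castSucc j.succ))
                        + t * (x (Fin.last (n + 1)) - x 0))) t := by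
                intro t
                by_cases ht : t ∈ Set.Icc (0 : ℝ) (1 - ∑ j, s j)
                · rw [Set.indicator_of_mem ((hmem t s).mpr ⟨hs, ht⟩),
                    Set.indicator_of_mem ht, hA]
                · rw [Set.indicator_of_notMem (fun hm => ht ((hmem t s).mp hm).2),
                    Set.indicator_of_notMem ht]
              simp_rw [hte]
              exact integral_indicator measurableSet_Icc
            · rw [Set.indicator_of_notMem hs]
              have hte : ∀ t : ℝ, S1.indicator G (e.symm (t, s)) = 0 := fun t =>
                Set.indicator_of_notMem (fun hm => hs ((hmem t s).mp hm).1) _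
              simp_rw [hte]
              exact integral_zero _ _
        _ = ∫ s in S0, (fun s => ∫ t in Set.Icc (0 : ℝ) (1 - ∑ j, s j),
              iteratedDeriv (n + 1) f
                (((1 - ∑ j, s j) * x 0 + ∑ j : Fin n, s j * x (Fin.castSucc j.succ))
                  + t * (x (Fin.last (n + 1)) - x 0))) s :=
            integral_indicator (simplex_measurableSet n)
        _ = _ := by
            refine setIntegral_congr_fun (simplex_measurableSet n) fun s hs => ?_
            obtain ⟨hsk, hsum⟩ := hs
            have hL0 : (0 : ℝ) ≤ 1 - ∑ j, s j := by linarith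
            set c := (1 - ∑ j, s j) * x 0 + ∑ j : Fin n, s j * x (Fin.castSucc j.succ)
              with hc
            set dd := x (Fin.last (n + 1)) - x 0 with hdd
            have hderiv : ∀ t ∈ Set.uIcc (0 : ℝ) (1 - ∑ j, s j),
                HasDerivAt (fun t => iteratedDeriv n f (c + t * dd))
                  (iteratedDeriv (n + 1) f (c + t * dd) * dd) t := by
              intro t _
              have h1 : HasDerivAt (fun t : ℝ => c + t * dd) dd t := by
                simpa using ((hasDerivAt_id t).mul_const dd).const_add c
              exact (hFd (c + t * dd)).comp t h1
            have hii : IntervalIntegrable (fun t =>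
                iteratedDeriv (n + 1) f (c + t * dd) * dd) volume 0 (1 - ∑ j, s j) :=
              ((hcont.comp (by fun_prop)).mul continuous_const).intervalIntegrable _ _
            have hftc := intervalIntegral.integral_eq_sub_of_hasDerivAt hderiv hii
            rw [intervalIntegral.integral_mul_const] at hftc
            rw [MeasureTheory.integral_Icc_eq_integral_Ioc,
              ← intervalIntegral.integral_of_le hL0]
            rw [eq_mul_inv_iff_mul_eq₀ hd]
            simpa using hftc
    -- identify both outer integrals using the induction hypothesis
    have hg : Function.Injective (fun i : Fin (n + 1) =>
        (Fin.cons (α := fun _ => Fin (n + 2)) (Fin.last (n + 1))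
          (fun k : Fin n => Fin.castSucc k.succ) i)) := by
      intro a b
      induction a using Fin.cases with
      | zero =>
        induction b using Fin.cases with
        | zero => intro _; rfl
        | succ b' =>
          intro hab
          simp only [Fin.cons_zero, Fin.cons_succ] at hab
          exact absurd hab.symm (Fin.castSucc_lt_last _).ne
      | succ a' =>
        induction b using Fin.cases with
        | zero =>
          intro hab
          simp only [Fin.cons_zero, Fin.cons_succ] at hab
          exact absurd hab (Fin.castSucc_lt_last _).ne
        | succ b' =>
          intro hab
          simp only [Fin.cons_succ] at hab
          exact congrArg Fin.succ (Fin.succ_injective _ (Fin.castSucc_injective _ hab))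
    set y : Fin (n + 1) → ℝ := fun i =>
      x (Fin.cons (α := fun _ => Fin (n + 2)) (Fin.last (n + 1))
        (fun k : Fin n => Fin.castSucc k.succ) i) with hy
    have hyinj : Function.Injective y := fun a b hab => hg (hx hab)
    have hxc : Function.Injective (fun i : Fin (n + 1) => x (Fin.castSucc i)) :=
      fun a b hab => Fin.castSucc_injective _ (hx hab)
    have intA : IntegrableOn (fun s : Fin n → ℝ => iteratedDeriv n f
        (((1 - ∑ j, s j) * x 0 + ∑ j : Fin n, s j * x (Fin.castSucc j.succ))
          + (1 - ∑ j, s j) * (x (Fin.last (n + 1)) - x 0))) S0 volume :=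
      ((hcontn.comp (by fun_prop)).continuousOn).integrableOn_compact (simplex_isCompact n)
    have intB : IntegrableOn (fun s : Fin n → ℝ => iteratedDeriv n f
        ((1 - ∑ j, s j) * x 0 + ∑ j : Fin n, s j * x (Fin.castSucc j.succ))) S0 volume :=
      ((hcontn.comp (by fun_prop)).continuousOn).integrableOn_compact (simplex_isCompact n)
    have hAe : (fun s : Fin n → ℝ => iteratedDeriv n f
        (((1 - ∑ j, s j) * x 0 + ∑ j : Fin n, s j * x (Fin.castSucc j.succ))
          + (1 - ∑ j, s j) * (x (Fin.last (n + 1)) - x 0)))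
        = fun s : Fin n → ℝ => iteratedDeriv n f
            ((1 - ∑ j, s j) * y 0 + ∑ j : Fin n, s j * y j.succ) := by
      funext s
      congr 1
      simp only [hy, Fin.cons_zero, Fin.cons_succ]
      ring
    have hBe : (fun s : Fin n → ℝ => iteratedDeriv n f
        ((1 - ∑ j, s j) * x 0 + ∑ j : Fin n, s j * x (Fin.castSucc j.succ)))
        = fun s : Fin n → ℝ => iteratedDeriv n f
            ((1 - ∑ j, s j) * (fun i : Fin (n + 1) => x (Fin.castSucc i)) 0
              + ∑ j : Fin n, s j * (fun i : Fin (n + 1) => x (Fin.castSucc i)) j.succ) := by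
      funext s
      rfl
    have key2 : (∫ s in S1, G s) =
        (divDiff f n y - divDiff f n (fun i : Fin (n + 1) => x (Fin.castSucc i)))
          * (x (Fin.last (n + 1)) - x 0)⁻¹ := by
      rw [key, integral_mul_const, integral_sub intA intB, hAe, hBe,
        ← ih f hfn y hyinj, ← ih f hfn _ hxc]
    calc divDiff f (n + 1) x
        = (divDiff f n y - divDiff f n (fun i : Fin (n + 1) => x (Fin.castSucc i)))
            * (x (Fin.last (n + 1)) - x 0)⁻¹ := by
          show (divDiff f n (fun i => x i.succ) - divDiff f n (fun i => x i.castSucc))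
              / (x (Fin.last (n + 1)) - x 0) = _
          rw [div_eq_mul_inv]
          have hcomp : (fun i : Fin (n + 1) => x i.succ) = y ∘ (finRotate (n + 1)) := by
            funext i
            induction i using Fin.lastCases with
            | last =>
              simp [hy, finRotate_last, Fin.succ_last]
            | cast k =>
              simp [hy, Fin.cons_succ, finRotate_succ_apply, Fin.coeSucc_eq_succ,
                Fin.succ_castSucc, -Fin.castSucc_succ]
          have hsucc : divDiff f n (fun i => x i.succ) = divDiff f n y := by
            rw [hcomp]
            exact divDiff_comp_equiv f n y hyinj (finRotate (n + 1))
          rw [hsucc]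
      _ = ∫ s in S1, G s := key2.symm

/-- Hermite–Genocchi formula: for an `n`-times continuously differentiable
`f : ℝ → ℝ` and pairwise distinct points `x_0, ..., x_n`,
`[x_0,...,x_n; f] = ∫_{Σ_n} f^{(n)}(Σ_j s_j x_j) ds`, where
`Σ_n = {(s_1,...,s_n) : s_j ≥ 0, Σ s_j ≤ 1}` and `s_0 = 1 − Σ_{j=1}^n s_j`. -/
theorem hermite_genocchi (n : ℕ) (f : ℝ → ℝ) (hf : ContDiff ℝ n f)
    (x : Fin (n + 1) → ℝ) (hx : Function.Injective x) :
    divDiff f n x =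
      ∫ s in {s : Fin n → ℝ | (∀ j, 0 ≤ s j) ∧ ∑ j, s j ≤ 1},
        iteratedDeriv n f ((1 - ∑ j, s j) * x 0 + ∑ j : Fin n, s j * x j.succ) := by
  exact HG n f hf x hx
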